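/- For each n ≥ 2 let c_n, d_n > 0 be bounded sequences with p_n = c_n/n ∈ (0,1) and q_n = d_n/n ∈ (0,1), let the prior on Θ_n be uniform, let θ_n ∈ Θ_n, let a_n ∈ (0, 1/2), and let k_n be an integer with k_n ≥ a_n·n. If a_n·n·(log(a_n) + (1/4)(√c_n − √d_n)² − 1) → ∞ as n → ∞, then P_{θ_n} Π(B_n(θ_n, k_n) | X^n) → 1, i.e. the posterior recovers the community assignment almost-exactly with error rate k_n. -/

import Mathlib

open Finset Real Filter

/-- The set of potential edges of an `n`-vertex graph: pairs `(i,j)` with `i < j`. -/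
abbrev Edge (n : ℕ) := {e : Fin n × Fin n // e.1 < e.2}

/-- An observed graph: an edge indicator for each potential edge. -/
abbrev ObsGraph (n : ℕ) := Edge n → Bool

/-- Edge probability under assignment `θ`: `p` within communities, `q` between. -/
noncomputable def edgeProb {n : ℕ} (p q : ℝ) (θ : Fin n → Bool) (e : Edge n) : ℝ :=
  if θ e.val.1 = θ e.val.2 then p else q

/-- Probability mass function of the observed graph under `θ`. -/
noncomputable def graphPMF {n : ℕ} (p q : ℝ) (θ : Fin n → Bool) (x : ObsGraph n) : ℝ :=
  ∏ e : Edge n, if x e then edgeProb p q θ e else 1 - edgeProb p q θ e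

/-- Hellinger affinity of Bernoulli parameters. -/
noncomputable def rho (p q : ℝ) : ℝ := Real.sqrt (p * q) + Real.sqrt ((1 - p) * (1 - q))

/-- Edges whose probability changes from `p` to `q` when replacing `θ` by `η`. -/
def D1 {n : ℕ} (θ η : Fin n → Bool) : Finset (Fin n × Fin n) :=
  Finset.univ.filter fun e => e.1 < e.2 ∧ θ e.1 = θ e.2 ∧ η e.1 ≠ η e.2

/-- Edges whose probability changes from `q` to `p` when replacing `θ` by `η`. -/
def D2 {n : ℕ} (θ η : Fin n → Bool) : Finset (Fin n × Fin n) :=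
  Finset.univ.filter fun e => e.1 < e.2 ∧ θ e.1 ≠ θ e.2 ∧ η e.1 = η e.2

/-- Hamming distance. -/
def hdist {n : ℕ} (θ η : Fin n → Bool) : ℕ := (Finset.univ.filter fun i => θ i ≠ η i).card

/-- The metric `k(θ,η) = h(θ,η) ∧ (n - h(θ,η))`. -/
def kdist {n : ℕ} (θ η : Fin n → Bool) : ℕ := min (hdist θ η) (n - hdist θ η)

/-- Size of the smallest community. -/
def countOnes {n : ℕ} (θ : Fin n → Bool) : ℕ := (Finset.univ.filter fun i => θ i = true).card

/-- The parameter space `Θ_n`. -/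
def Theta (n : ℕ) : Finset (Fin n → Bool) :=
  Finset.univ.filter fun θ => 2 * countOnes θ ≤ n ∧
    ∀ i : Fin n, 2 * countOnes θ = n → (i : ℕ) = 0 → θ i = false

/-- Posterior mass of `A ⊆ Θ_n` given data `x`, under prior mass function `π`. -/
noncomputable def postMass {n : ℕ} (p q : ℝ) (pri : (Fin n → Bool) → ℝ)
    (A : Finset (Fin n → Bool)) (x : ObsGraph n) : ℝ :=
  (∑ η ∈ A, pri η * graphPMF p q η x) / (∑ η ∈ Theta n, pri η * graphPMF p q η x)

/-- `P_θ`-expectation of the posterior mass of `A`. -/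
noncomputable def expPostMass {n : ℕ} (p q : ℝ) (pri : (Fin n → Bool) → ℝ)
    (θ : Fin n → Bool) (A : Finset (Fin n → Bool)) : ℝ :=
  ∑ x : ObsGraph n, graphPMF p q θ x * postMass p q pri A x

/-- The uniform prior on `Θ_n`. -/
noncomputable def unifPrior (n : ℕ) : (Fin n → Bool) → ℝ := fun _ => ((2:ℝ) ^ (n - 1))⁻¹

/-- Hamming ball `B_n(θ,k)` inside `Θ_n`. -/
def hball {n : ℕ} (θ : Fin n → Bool) (k : ℕ) : Finset (Fin n → Bool) :=
  (Theta n).filter fun η => kdist η θ ≤ k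


/- ===== auxiliary lemmas ===== -/

lemma sum_pi_bool {E : Type*} [Fintype E] [DecidableEq E] (F : E → Bool → ℝ) :
    ∑ x : E → Bool, ∏ e, F e (x e) = ∏ e, (F e false + F e true) := by
  have := Finset.prod_univ_sum (ι := E) (fun _ => (univ : Finset Bool)) (fun e b => F e b)
  rw [Fintype.piFinset_univ] at this
  rw [← this]; congr 1; funext e; rw [Fintype.sum_bool]; ring

lemma sqrt_prod {ι : Type*} (s : Finset ι) (f : ι → ℝ) (h : ∀ i ∈ s, 0 ≤ f i) :
    Real.sqrt (∏ i ∈ s, f i) = ∏ i ∈ s, Real.sqrt (f i) := by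
  induction s using Finset.cons_induction with
  | empty => simp
  | cons i s hi ih =>
      rw [Finset.prod_cons, Finset.prod_cons, Real.sqrt_mul (h i (Finset.mem_cons_self i s)),
        ih (fun j hj => h j (Finset.mem_cons_of_mem hj))]

lemma amgm2 {x y : ℝ} (hx : 0 ≤ x) (hy : 0 ≤ y) : Real.sqrt (x * y) ≤ (x + y) / 2 := by
  rw [show (x+y)/2 = Real.sqrt (((x+y)/2)^2) from (Real.sqrt_sq (by positivity)).symm]
  apply Real.sqrt_le_sqrt; nlinarith [sq_nonneg (x - y)]

lemma rho_nonneg {p q : ℝ} : 0 ≤ rho p q := by unfold rho; positivity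

lemma rho_le_exp {p q : ℝ} (hp : 0 ≤ p) (hp1 : p ≤ 1) (hq : 0 ≤ q) (hq1 : q ≤ 1) :
    rho p q ≤ Real.exp (-((Real.sqrt p - Real.sqrt q)^2 / 2)) := by
  have key : rho p q ≤ 1 - (Real.sqrt p - Real.sqrt q)^2 / 2 := by
    have h2 := amgm2 (by linarith : (0:ℝ) ≤ 1 - p) (by linarith : (0:ℝ) ≤ 1 - q)
    have e1 : Real.sqrt p * Real.sqrt q = Real.sqrt (p * q) := (Real.sqrt_mul hp q).symm
    have e2 : Real.sqrt p ^ 2 = p := Real.sq_sqrt hp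
    have e3 : Real.sqrt q ^ 2 = q := Real.sq_sqrt hq
    unfold rho; nlinarith [sub_sq (Real.sqrt p) (Real.sqrt q)]
  calc rho p q ≤ 1 - (Real.sqrt p - Real.sqrt q)^2 / 2 := key
    _ ≤ Real.exp (-((Real.sqrt p - Real.sqrt q)^2 / 2)) := by
        have := Real.add_one_le_exp (-((Real.sqrt p - Real.sqrt q)^2 / 2)); linarith

lemma edgeProb_mem {n : ℕ} {p q : ℝ} (hp : p ∈ Set.Ioo (0:ℝ) 1) (hq : q ∈ Set.Ioo (0:ℝ) 1)
    (θ : Fin n → Bool) (e : Edge n) : edgeProb p q θ e ∈ Set.Ioo (0:ℝ) 1 := by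
  unfold edgeProb; split <;> assumption

lemma graphPMF_pos {n : ℕ} {p q : ℝ} (hp : p ∈ Set.Ioo (0:ℝ) 1) (hq : q ∈ Set.Ioo (0:ℝ) 1)
    (θ : Fin n → Bool) (x : ObsGraph n) : 0 < graphPMF p q θ x := by
  apply Finset.prod_pos
  intro e _
  have := edgeProb_mem hp hq θ e
  split
  · exact this.1
  · linarith [this.2]

lemma sum_graphPMF {n : ℕ} (p q : ℝ) (θ : Fin n → Bool) :
    ∑ x : ObsGraph n, graphPMF p q θ x = 1 := by
  have := sum_pi_bool (E := Edge n)
    (fun e b => if b then edgeProb p q θ e else 1 - edgeProb p q θ e)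
  unfold graphPMF
  rw [this]; simp

lemma hellinger {n : ℕ} {p q : ℝ} (hp : p ∈ Set.Ioo (0:ℝ) 1) (hq : q ∈ Set.Ioo (0:ℝ) 1)
    (θ η : Fin n → Bool) :
    ∑ x : ObsGraph n, Real.sqrt (graphPMF p q θ x * graphPMF p q η x)
      = rho p q ^ (univ.filter fun e : Edge n =>
          ¬((θ e.val.1 = θ e.val.2) ↔ (η e.val.1 = η e.val.2))).card := by
  have step1 : ∀ x : ObsGraph n, Real.sqrt (graphPMF p q θ x * graphPMF p q η x)
      = ∏ e : Edge n, (fun b => Real.sqrt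
          ((if b then edgeProb p q θ e else 1 - edgeProb p q θ e) *
           (if b then edgeProb p q η e else 1 - edgeProb p q η e))) (x e) := by
    intro x
    unfold graphPMF
    rw [← Finset.prod_mul_distrib, _root_.sqrt_prod]
    intro e _
    have h1 := edgeProb_mem hp hq θ e
    have h2 := edgeProb_mem hp hq η e
    cases x e <;> simp <;> nlinarith [h1.1, h1.2, h2.1, h2.2]
  have hF := sum_pi_bool (E := Edge n)
    (fun e b => Real.sqrt
          ((if b then edgeProb p q θ e else 1 - edgeProb p q θ e) *
           (if b then edgeProb p q η e else 1 - edgeProb p q η e)))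
  have h0p : (0:ℝ) ≤ p := hp.1.le
  have h1p : p ≤ 1 := hp.2.le
  have h0q : (0:ℝ) ≤ q := hq.1.le
  have h1q : q ≤ 1 := hq.2.le
  calc ∑ x : ObsGraph n, Real.sqrt (graphPMF p q θ x * graphPMF p q η x)
      = ∏ e : Edge n, (Real.sqrt ((1 - edgeProb p q θ e) * (1 - edgeProb p q η e))
          + Real.sqrt (edgeProb p q θ e * edgeProb p q η e)) := by
        rw [Finset.sum_congr rfl (fun x _ => step1 x), hF]; simp
    _ = ∏ e : Edge n, (if ¬((θ e.val.1 = θ e.val.2) ↔ (η e.val.1 = η e.val.2))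
          then rho p q else 1) := by
        apply Finset.prod_congr rfl
        intro e _
        by_cases h1 : θ e.val.1 = θ e.val.2 <;> by_cases h2 : η e.val.1 = η e.val.2 <;>
          simp [edgeProb, h1, h2, rho]
        · rw [Real.sqrt_mul_self (by linarith : (0:ℝ) ≤ 1 - p), Real.sqrt_mul_self h0p]; ring
        · rw [add_comm]
        · rw [mul_comm (1-q) (1-p), mul_comm q p, add_comm]
        · rw [Real.sqrt_mul_self (by linarith : (0:ℝ) ≤ 1 - q), Real.sqrt_mul_self h0q]; ring
    _ = rho p q ^ (univ.filter fun e : Edge n =>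
          ¬((θ e.val.1 = θ e.val.2) ↔ (η e.val.1 = η e.val.2))).card := by
        rw [Finset.prod_ite, Finset.prod_const, Finset.prod_const_one, mul_one]
lemma discord_card {n : ℕ} (θ η : Fin n → Bool) :
    (univ.filter fun e : Edge n =>
        ¬((θ e.val.1 = θ e.val.2) ↔ (η e.val.1 = η e.val.2))).card
      = hdist θ η * (n - hdist θ η) := by
  classical
  set S : Finset (Fin n) := univ.filter fun i => θ i ≠ η i with hS
  have hmem : ∀ i : Fin n, i ∈ S ↔ θ i ≠ η i := by intro i; simp [hS]
  have blem : ∀ a b c' d : Bool, (¬((a = b) ↔ (c' = d))) ↔ ((a ≠ c') ↔ ¬(b ≠ d)) := by decide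
  have cond_iff : ∀ e : Fin n × Fin n,
      (¬((θ e.1 = θ e.2) ↔ (η e.1 = η e.2))) ↔ ((e.1 ∈ S) ↔ (e.2 ∉ S)) := by
    intro e
    rw [hmem, hmem]
    exact blem (θ e.1) (θ e.2) (η e.1) (η e.2)
  -- step 1 : subtype filter to pair filter
  have step1 : (univ.filter fun e : Edge n =>
        ¬((θ e.val.1 = θ e.val.2) ↔ (η e.val.1 = η e.val.2))).card
      = (univ.filter fun e : Fin n × Fin n =>
          e.1 < e.2 ∧ ((e.1 ∈ S) ↔ (e.2 ∉ S))).card := by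
    apply Finset.card_nbij (fun e => e.val)
    · intro e he
      simp only [Finset.mem_coe, Finset.mem_filter, Finset.mem_univ, true_and] at he ⊢
      exact ⟨e.prop, (cond_iff e.val).mp he⟩
    · intro e₁ _ e₂ _ h
      exact Subtype.ext h
    · intro e he
      simp only [Finset.coe_filter, Finset.mem_univ, true_and, Set.mem_setOf_eq,
        Set.mem_image] at he ⊢
      exact ⟨⟨e, he.1⟩, (cond_iff e).mpr he.2, rfl⟩
  -- step 2 : pair filter to product
  have step2 : (univ.filter fun e : Fin n × Fin n =>
          e.1 < e.2 ∧ ((e.1 ∈ S) ↔ (e.2 ∉ S))).card = (S ×ˢ Sᶜ).card := by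
    apply Finset.card_nbij' (fun e => if e.1 ∈ S then e else e.swap)
      (fun e => if e.1 < e.2 then e else e.swap)
    · intro e he
      simp only [Finset.mem_coe, Finset.mem_filter, Finset.mem_univ, true_and] at he
      obtain ⟨hlt, hiff⟩ := he
      by_cases h1 : e.1 ∈ S
      · simp only [if_pos h1, Finset.mem_coe, Finset.mem_product, Finset.mem_compl]
        exact ⟨h1, hiff.mp h1⟩
      · simp only [if_neg h1, Finset.mem_coe, Finset.mem_product, Finset.mem_compl, Prod.fst_swap,
          Prod.snd_swap]
        exact ⟨not_not.mp (fun h => h1 (hiff.mpr h)), h1⟩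
    · intro e he
      simp only [Finset.mem_coe, Finset.mem_product, Finset.mem_compl] at he
      obtain ⟨h1, h2⟩ := he
      have hne : e.1 ≠ e.2 := fun h => h2 (h ▸ h1)
      by_cases hlt : e.1 < e.2
      · simp only [if_pos hlt, Finset.mem_coe, Finset.mem_filter, Finset.mem_univ, true_and]
        exact ⟨hlt, iff_of_true h1 h2⟩
      · have hlt' : e.2 < e.1 := lt_of_le_of_ne (le_of_not_gt hlt) hne.symm
        simp only [if_neg hlt, Finset.mem_coe, Finset.mem_filter, Finset.mem_univ, true_and, Prod.fst_swap,
          Prod.snd_swap]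
        exact ⟨hlt', iff_of_false h2 (not_not.mpr h1)⟩
    · intro e he
      simp only [Finset.mem_coe, Finset.mem_filter, Finset.mem_univ, true_and] at he
      obtain ⟨hlt, _⟩ := he
      by_cases h1 : e.1 ∈ S
      · simp [h1, hlt]
      · simp only [if_neg h1, Prod.fst_swap, Prod.snd_swap]
        rw [if_neg (by exact lt_asymm hlt), Prod.swap_swap]
    · intro e he
      simp only [Finset.mem_coe, Finset.mem_product, Finset.mem_compl] at he
      obtain ⟨h1, h2⟩ := he
      by_cases hlt : e.1 < e.2
      · simp [hlt, h1]
      · simp only [if_neg hlt, Prod.fst_swap, Prod.snd_swap]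
        rw [if_neg h2, Prod.swap_swap]
  rw [step1, step2, Finset.card_product, Finset.card_compl]
  simp [hdist, hS]
lemma hdist_comm {n : ℕ} (θ η : Fin n → Bool) : hdist θ η = hdist η θ := by
  unfold hdist; congr 1; apply Finset.filter_congr; intro i _; simp [ne_comm]

lemma hdist_le {n : ℕ} (θ η : Fin n → Bool) : hdist θ η ≤ n := by
  calc hdist θ η ≤ (univ : Finset (Fin n)).card := Finset.card_filter_le _ _
    _ = n := by simp

lemma card_hdist_fiber {n : ℕ} (θ : Fin n → Bool) (h : ℕ) :
    (univ.filter fun η : Fin n → Bool => hdist η θ = h).card ≤ n.choose h := by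
  classical
  have : ((univ : Finset (Fin n)).powersetCard h).card = n.choose h := by
    rw [Finset.card_powersetCard]; simp
  rw [← this]
  apply Finset.card_le_card_of_injOn (fun η => univ.filter fun i => η i ≠ θ i)
  · intro η hη
    simp only [Finset.mem_coe, Finset.mem_filter, Finset.mem_univ, true_and] at hη
    rw [Finset.mem_coe, Finset.mem_powersetCard]
    exact ⟨Finset.filter_subset _ _ |>.trans (Finset.subset_univ _), hη⟩
  · intro η₁ h₁ η₂ h₂ heq
    funext i
    have heq' : (univ.filter fun i => η₁ i ≠ θ i) = (univ.filter fun i => η₂ i ≠ θ i) := heq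
    have : (i ∈ univ.filter fun j => η₁ j ≠ θ j) = (i ∈ univ.filter fun j => η₂ j ≠ θ j) := by
      rw [heq']
    simp only [Finset.mem_filter, Finset.mem_univ, true_and, eq_iff_iff] at this
    revert this
    cases η₁ i <;> cases η₂ i <;> cases θ i <;> decide

lemma pow_le_exp_mul_factorial : ∀ m : ℕ, (m:ℝ)^m ≤ Real.exp m * m.factorial := by
  intro m
  induction m with
  | zero => simp
  | succ m ih =>
      rcases Nat.eq_zero_or_pos m with hm | hm
      · subst hm
        norm_num
      · have hmR : (1:ℝ) ≤ (m:ℝ) := by exact_mod_cast hm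
        have key : ((m:ℝ)+1)^m ≤ Real.exp 1 * (m:ℝ)^m := by
          have h1 : ((m:ℝ)+1) ≤ Real.exp (1/(m:ℝ)) * m := by
            have := Real.add_one_le_exp (1/(m:ℝ))
            have hm0 : (0:ℝ) < m := by linarith
            calc ((m:ℝ)+1) = (1/(m:ℝ) + 1) * m := by field_simp; ring
              _ ≤ Real.exp (1/(m:ℝ)) * m := by
                  apply mul_le_mul_of_nonneg_right this hm0.le
          calc ((m:ℝ)+1)^m ≤ (Real.exp (1/(m:ℝ)) * m)^m := by
                apply pow_le_pow_left₀ (by positivity) h1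
            _ = Real.exp (1/(m:ℝ))^m * (m:ℝ)^m := mul_pow _ _ _
            _ = Real.exp (m * (1/(m:ℝ))) * (m:ℝ)^m := by rw [← Real.exp_nat_mul]
            _ = Real.exp 1 * (m:ℝ)^m := by
                congr 2
                field_simp
        have hfac : ((m+1 : ℕ) : ℝ) * ((m.factorial : ℕ) : ℝ) = ((m+1).factorial : ℝ) := by
          rw [Nat.factorial_succ]; push_cast; ring
        calc ((m+1:ℕ):ℝ)^(m+1) = ((m:ℝ)+1) * ((m:ℝ)+1)^m := by push_cast; ring
          _ ≤ ((m:ℝ)+1) * (Real.exp 1 * (m:ℝ)^m) := by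
              apply mul_le_mul_of_nonneg_left key (by positivity)
          _ ≤ ((m:ℝ)+1) * (Real.exp 1 * (Real.exp m * m.factorial)) := by
              apply mul_le_mul_of_nonneg_left _ (by positivity)
              apply mul_le_mul_of_nonneg_left ih (Real.exp_pos 1).le
          _ = Real.exp ((m:ℝ)+1) * (((m:ℝ)+1) * ((m.factorial : ℕ) : ℝ)) := by
              rw [Real.exp_add]; ring
          _ = Real.exp ((m+1:ℕ):ℝ) * ((m+1).factorial : ℝ) := by
              rw [← hfac]; push_cast; ring
lemma choose_le_exp {n m : ℕ} (hm : 1 ≤ m) (hn : 1 ≤ n) :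
    (n.choose m : ℝ) ≤ Real.exp (m * (1 - Real.log ((m:ℝ) / n))) := by
  have hm0 : (0:ℝ) < m := by exact_mod_cast hm
  have hn0 : (0:ℝ) < n := by exact_mod_cast hn
  have hfac : (0:ℝ) < ((m.factorial : ℕ) : ℝ) := by exact_mod_cast m.factorial_pos
  have h1 : (n.choose m : ℝ) ≤ (n:ℝ)^m / m.factorial := by
    have := Nat.choose_le_pow_div (α := ℝ) m n
    simpa using this
  have h2 : (n:ℝ)^m / m.factorial ≤ (n:ℝ)^m * Real.exp m / (m:ℝ)^m := by
    rw [div_le_div_iff₀ hfac (by positivity)]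
    calc (n:ℝ)^m * (m:ℝ)^m = (m:ℝ)^m * (n:ℝ)^m := by ring
      _ ≤ (Real.exp m * m.factorial) * (n:ℝ)^m := by
          apply mul_le_mul_of_nonneg_right (pow_le_exp_mul_factorial m) (by positivity)
      _ = (n:ℝ)^m * Real.exp m * m.factorial := by ring
  have h3 : (n:ℝ)^m * Real.exp m / (m:ℝ)^m = Real.exp (m * (1 - Real.log ((m:ℝ) / n))) := by
    rw [show (n:ℝ)^m = Real.exp (m * Real.log n) by
          rw [Real.exp_nat_mul, Real.exp_log hn0],
        show (m:ℝ)^m = Real.exp (m * Real.log m) by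
          rw [Real.exp_nat_mul, Real.exp_log hm0],
        ← Real.exp_add, ← Real.exp_sub, Real.log_div (ne_of_gt hm0) (ne_of_gt hn0)]
    congr 1
    push_cast
    ring
  linarith
lemma phi_mono {N B : ℝ} (hN : 0 < N) {x y : ℝ} (hx : 0 < x) (hxy : x ≤ y) :
    x * (Real.log (x/N) + B) + (y - x) * (Real.log (x/N) + B)
      ≤ y * (Real.log (y/N) + B) := by
  have hlog : Real.log (x/N) ≤ Real.log (y/N) :=
    Real.log_le_log (by positivity) (by gcongr)
  nlinarith [hx.le.trans hxy]

lemma phi_incr {N B : ℝ} (hN : 0 < N) {j : ℝ} (hj : 1 ≤ j)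
    (hjB : 0 ≤ Real.log (j/N) + B) :
    j * (Real.log (j/N) + B) + 1/2 ≤ (j+1) * (Real.log ((j+1)/N) + B) := by
  have hj0 : (0:ℝ) < j := by linarith
  have hj10 : (0:ℝ) < j + 1 := by linarith
  have l1 : Real.log ((j+1)/N) = Real.log (j/N) + Real.log ((j+1)/j) := by
    rw [Real.log_div (by positivity) (ne_of_gt hN), Real.log_div (ne_of_gt hj0) (ne_of_gt hN),
      Real.log_div (by positivity) (ne_of_gt hj0)]
    ring
  have l2 : 1/(j+1) ≤ Real.log ((j+1)/j) := by
    have h := Real.log_le_sub_one_of_pos (show (0:ℝ) < j/(j+1) by positivity)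
    have : Real.log (j/(j+1)) = - Real.log ((j+1)/j) := by
      rw [Real.log_div (ne_of_gt hj0) (ne_of_gt hj10),
        Real.log_div (ne_of_gt hj10) (ne_of_gt hj0)]
      ring
    rw [this] at h
    have hd : j/(j+1) - 1 = -(1/(j+1)) := by rw [div_sub_one (ne_of_gt hj10)]; ring
    rw [hd] at h
    linarith
  have l3 : 1/2 ≤ j * Real.log ((j+1)/j) := by
    have : j * (1/(j+1)) ≤ j * Real.log ((j+1)/j) :=
      mul_le_mul_of_nonneg_left l2 hj0.le
    have h2 : (1:ℝ)/2 ≤ j/(j+1) := by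
      rw [div_le_div_iff₀ (by norm_num) hj10]; linarith
    calc (1:ℝ)/2 ≤ j/(j+1) := h2
      _ = j * (1/(j+1)) := by ring
      _ ≤ j * Real.log ((j+1)/j) := this
  rw [l1]
  nlinarith

lemma phi_chain {N B a : ℝ} (hN : 0 < N) (ha : 0 < a) (K : ℕ) (hK : a * N ≤ K + 1)
    (hG : 0 ≤ Real.log a + B) :
    ∀ i : ℕ, a * N * (Real.log a + B) + i / 2
      ≤ ((K:ℝ) + 1 + i) * (Real.log (((K:ℝ) + 1 + i)/N) + B) := by
  have haN : (0:ℝ) < a * N := by positivity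
  have hbase : ∀ j : ℝ, (K:ℝ) + 1 ≤ j → 0 ≤ Real.log (j/N) + B := by
    intro j hjK
    have hja : a ≤ j / N := by
      rw [le_div_iff₀ hN]; linarith
    have : Real.log a ≤ Real.log (j/N) := Real.log_le_log ha hja
    linarith
  intro i
  induction i with
  | zero =>
      have hm := phi_mono (B := B) hN haN (show a * N ≤ (K:ℝ)+1 by linarith)
      rw [mul_div_assoc, div_self (ne_of_gt hN), mul_one] at hm
      have hcoef : 0 ≤ ((K:ℝ) + 1 - a*N) * (Real.log a + B) :=
        mul_nonneg (by linarith) hG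
      push_cast
      norm_num
      nlinarith
  | succ i ih =>
      have hj : (1:ℝ) ≤ (K:ℝ) + 1 + i := by
        have h1 := Nat.cast_nonneg (α := ℝ) K
        have h2 := Nat.cast_nonneg (α := ℝ) i
        linarith
      have hstep := phi_incr (B := B) hN hj (hbase _ (by linarith [Nat.cast_nonneg (α := ℝ) i]))
      push_cast
      push_cast at ih
      have : ((K:ℝ) + 1 + (i + 1)) = ((K:ℝ) + 1 + i) + 1 := by ring
      rw [this]
      calc a * N * (Real.log a + B) + (↑i + 1) / 2
          = (a * N * (Real.log a + B) + ↑i / 2) + 1/2 := by ring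
        _ ≤ ((K:ℝ) + 1 + i) * (Real.log (((K:ℝ) + 1 + i)/N) + B) + 1/2 := by linarith
        _ ≤ (((K:ℝ) + 1 + i) + 1) * (Real.log ((((K:ℝ) + 1 + i) + 1)/N) + B) := hstep


lemma geom_tail (s t : ℕ) : ∑ m ∈ Finset.Icc s t, (Real.exp (-(1/2):ℝ))^(m-s) ≤ 3 := by
  set r : ℝ := Real.exp (-(1/2):ℝ) with hr
  have hr0 : 0 < r := Real.exp_pos _
  have hr23 : r ≤ 2/3 := by
    have h1 : (3:ℝ)/2 ≤ Real.exp (1/2) := by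
      have := Real.add_one_le_exp ((1:ℝ)/2); linarith
    have h2 : Real.exp (-(1/2):ℝ) = (Real.exp (1/2))⁻¹ := by
      rw [← Real.exp_neg]
    rw [hr, h2]
    rw [inv_le_comm₀ (Real.exp_pos _) (by norm_num)]
    linarith
  have step : ∑ m ∈ Finset.Icc s t, r^(m-s) = ∑ i ∈ Finset.range (t+1-s), r^i := by
    apply Finset.sum_nbij' (fun m => m - s) (fun i => s + i)
    · intro m hm; simp only [Finset.mem_Icc] at hm; simp only [Finset.mem_range]; omega
    · intro i hi; simp only [Finset.mem_range] at hi; simp only [Finset.mem_Icc]; omega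
    · intro m hm; simp only [Finset.mem_Icc] at hm; omega
    · intro i hi; simp only [Finset.mem_range] at hi; omega
    · intro m hm; rfl
  rw [step, geom_sum_eq (by nlinarith : r ≠ 1)]
  have hpow : 0 ≤ r ^ (t+1-s) := by positivity
  rw [div_le_iff_of_neg (by nlinarith : r - 1 < 0)]
  nlinarith

set_option maxHeartbeats 2000000 in
lemma main_bound {n : ℕ} (hn : 2 ≤ n) {p q : ℝ} (hp : p ∈ Set.Ioo (0:ℝ) 1)
    (hq : q ∈ Set.Ioo (0:ℝ) 1) {θ : Fin n → Bool} (hθ : θ ∈ Theta n)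
    {a : ℝ} (ha : 0 < a) (ha2 : a < 1/2) {k : ℕ} (hk : a * n ≤ k) {B : ℝ}
    (hG : 0 ≤ Real.log a + B)
    (hrho : rho p q ≤ Real.exp (-(2*(B+1))/n)) :
    1 - 6 * Real.exp (-(a * n * (Real.log a + B)))
        ≤ expPostMass p q (unifPrior n) θ (hball θ k)
      ∧ expPostMass p q (unifPrior n) θ (hball θ k) ≤ 1 := by
  classical
  have hn0 : (0:ℝ) < n := by positivity
  have hnn : 0 < n := by omega
  set u : ℝ := ((2:ℝ) ^ (n - 1))⁻¹ with hu
  have hu0 : 0 < u := by rw [hu]; positivity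
  set pmf : (Fin n → Bool) → ObsGraph n → ℝ := fun η x => graphPMF p q η x with hpmf
  have pmf_pos : ∀ η x, 0 < pmf η x := fun η x => graphPMF_pos hp hq η x
  set D : ObsGraph n → ℝ := fun x => ∑ η ∈ Theta n, u * pmf η x with hD
  have hD_ge : ∀ (η : Fin n → Bool), η ∈ Theta n → ∀ x, u * pmf η x ≤ D x := by
    intro η hη x
    exact Finset.single_le_sum (f := fun η' => u * pmf η' x)
      (fun η' _ => le_of_lt (mul_pos hu0 (pmf_pos η' x))) hη
  have hD_pos : ∀ x, 0 < D x := fun x =>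
    lt_of_lt_of_le (mul_pos hu0 (pmf_pos θ x)) (hD_ge θ hθ x)
  set E : Finset (Fin n → Bool) := (Theta n).filter (fun η => ¬ (kdist η θ ≤ k)) with hE
  -- decomposition of the posterior
  have post_split : ∀ x, postMass p q (unifPrior n) (hball θ k) x
      = 1 - (∑ η ∈ E, u * pmf η x) / D x := by
    intro x
    have hsplit : (∑ η ∈ hball θ k, u * pmf η x) + (∑ η ∈ E, u * pmf η x) = D x := by
      rw [hD, hE]
      exact Finset.sum_filter_add_sum_filter_not (Theta n) (fun η => kdist η θ ≤ k) _
    unfold postMass unifPrior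
    rw [eq_sub_iff_add_eq, ← add_div, ← hu]
    rw [show (∑ η ∈ hball θ k, u * pmf η x) = ∑ η ∈ hball θ k, u * graphPMF p q η x from rfl] at hsplit
    rw [hsplit]
    exact div_self (ne_of_gt (hD_pos x))
  -- expPostMass = 1 - error term
  have exp_eq : expPostMass p q (unifPrior n) θ (hball θ k)
      = 1 - ∑ x : ObsGraph n, pmf θ x * ((∑ η ∈ E, u * pmf η x) / D x) := by
    unfold expPostMass
    rw [Finset.sum_congr rfl (fun x _ => by rw [post_split x])]
    rw [Finset.sum_congr rfl (fun x _ => mul_sub (graphPMF p q θ x) 1 _)]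
    rw [Finset.sum_sub_distrib]
    simp only [mul_one]
    rw [sum_graphPMF p q θ]
  -- upper bound
  have upper : expPostMass p q (unifPrior n) θ (hball θ k) ≤ 1 := by
    rw [exp_eq]
    have : 0 ≤ ∑ x : ObsGraph n, pmf θ x * ((∑ η ∈ E, u * pmf η x) / D x) := by
      apply Finset.sum_nonneg
      intro x _
      apply mul_nonneg (pmf_pos θ x).le
      apply div_nonneg _ (hD_pos x).le
      exact Finset.sum_nonneg fun η _ => (mul_pos hu0 (pmf_pos η x)).le
    linarith
  refine ⟨?_, upper⟩
  rw [exp_eq]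
  -- the error term bound
  have err_le : ∑ x : ObsGraph n, pmf θ x * ((∑ η ∈ E, u * pmf η x) / D x)
      ≤ ∑ η ∈ E, (rho p q) ^ (hdist η θ * (n - hdist η θ)) := by
    have swap : ∑ x : ObsGraph n, pmf θ x * ((∑ η ∈ E, u * pmf η x) / D x)
        = ∑ η ∈ E, ∑ x : ObsGraph n, pmf θ x * ((u * pmf η x) / D x) := by
      rw [Finset.sum_comm]
      apply Finset.sum_congr rfl
      intro x _
      rw [Finset.sum_div, Finset.mul_sum]
    rw [swap]
    apply Finset.sum_le_sum
    intro η hη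
    have hηT : η ∈ Theta n := Finset.mem_filter.mp hη |>.1
    have perx : ∀ x : ObsGraph n, pmf θ x * ((u * pmf η x) / D x)
        ≤ Real.sqrt (pmf θ x * pmf η x) := by
      intro x
      have hmin : pmf θ x * ((u * pmf η x) / D x) ≤ min (pmf θ x) (pmf η x) := by
        rcases le_total (pmf θ x) (pmf η x) with hle | hle
        · rw [min_eq_left hle]
          calc pmf θ x * ((u * pmf η x) / D x) ≤ pmf θ x * 1 := by
                apply mul_le_mul_of_nonneg_left _ (pmf_pos θ x).le
                rw [div_le_one (hD_pos x)]
                exact hD_ge η hηT x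
            _ = pmf θ x := mul_one _
        · rw [min_eq_right hle]
          have hre : pmf θ x * ((u * pmf η x) / D x) = pmf η x * ((u * pmf θ x) / D x) := by
            ring
          rw [hre]
          calc pmf η x * ((u * pmf θ x) / D x) ≤ pmf η x * 1 := by
                apply mul_le_mul_of_nonneg_left _ (pmf_pos η x).le
                rw [div_le_one (hD_pos x)]
                exact hD_ge θ hθ x
            _ = pmf η x := mul_one _
      calc pmf θ x * ((u * pmf η x) / D x) ≤ min (pmf θ x) (pmf η x) := hmin
        _ ≤ Real.sqrt (pmf θ x * pmf η x) := by
            rw [Real.le_sqrt (le_min (pmf_pos θ x).le (pmf_pos η x).le)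
              (mul_pos (pmf_pos θ x) (pmf_pos η x)).le]
            nlinarith [min_le_left (pmf θ x) (pmf η x), min_le_right (pmf θ x) (pmf η x),
              le_min (pmf_pos θ x).le (pmf_pos η x).le]
    calc ∑ x : ObsGraph n, pmf θ x * ((u * pmf η x) / D x)
        ≤ ∑ x : ObsGraph n, Real.sqrt (pmf θ x * pmf η x) :=
          Finset.sum_le_sum fun x _ => perx x
      _ = rho p q ^ (univ.filter fun e : Edge n =>
            ¬((θ e.val.1 = θ e.val.2) ↔ (η e.val.1 = η e.val.2))).card := hellinger hp hq θ η
      _ = rho p q ^ (hdist θ η * (n - hdist θ η)) := by rw [discord_card]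
      _ = rho p q ^ (hdist η θ * (n - hdist η θ)) := by rw [hdist_comm]
  set T : ℝ := a * n * (Real.log a + B) with hT
  have hB1 : 0 < B + 1 := by
    have hla : Real.log a < 0 := Real.log_neg ha (by linarith)
    linarith
  have maps : ∀ η ∈ E, kdist η θ ∈ Finset.Icc (k+1) n := by
    intro η hη
    have h1 : ¬ (kdist η θ ≤ k) := (Finset.mem_filter.mp hη).2
    have h2 : kdist η θ ≤ n := le_trans (min_le_left _ _) (hdist_le η θ)
    simp only [Finset.mem_Icc]; omega
  have fib : ∑ η ∈ E, (rho p q) ^ (hdist η θ * (n - hdist η θ))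
      = ∑ m ∈ Finset.Icc (k+1) n, ∑ η ∈ E.filter (fun η => kdist η θ = m),
          (rho p q) ^ (hdist η θ * (n - hdist η θ)) :=
    (Finset.sum_fiberwise_of_maps_to maps _).symm
  have per_m : ∀ m ∈ Finset.Icc (k+1) n,
      ∑ η ∈ E.filter (fun η => kdist η θ = m), (rho p q) ^ (hdist η θ * (n - hdist η θ))
        ≤ 2 * Real.exp (-T) * (Real.exp (-(1/2):ℝ))^(m - (k+1)) := by
    intro m hm
    simp only [Finset.mem_Icc] at hm
    obtain ⟨hm1, hm2⟩ := hm
    rcases Finset.eq_empty_or_nonempty (E.filter (fun η => kdist η θ = m)) with he | hne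
    · rw [he]; simp; positivity
    · obtain ⟨η₀, hη₀⟩ := hne
      have hkd : kdist η₀ θ = m := (Finset.mem_filter.mp hη₀).2
      have h2m : 2 * m ≤ n := by
        have h1 : m ≤ hdist η₀ θ := hkd ▸ min_le_left _ _
        have h2 : m ≤ n - hdist η₀ θ := hkd ▸ min_le_right _ _
        have := hdist_le η₀ θ
        omega
      have hval : ∀ η ∈ E.filter (fun η => kdist η θ = m),
          (rho p q) ^ (hdist η θ * (n - hdist η θ)) = (rho p q) ^ (m * (n - m)) := by
        intro η hη
        have hkd' : kdist η θ = m := (Finset.mem_filter.mp hη).2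
        have hle := hdist_le η θ
        unfold kdist at hkd'
        rcases min_cases (hdist η θ) (n - hdist η θ) with ⟨h1, h2⟩ | ⟨h1, h2⟩
        · rw [show hdist η θ = m by omega]
        · rw [show hdist η θ = n - m by omega, show n - (n - m) = m by omega, Nat.mul_comm]
      rw [Finset.sum_congr rfl hval, Finset.sum_const, nsmul_eq_mul]
      have hcard : (E.filter (fun η => kdist η θ = m)).card ≤ 2 * n.choose m := by
        have hsub : E.filter (fun η => kdist η θ = m) ⊆
            (univ.filter fun η : Fin n → Bool => hdist η θ = m)
              ∪ (univ.filter fun η : Fin n → Bool => hdist η θ = n - m) := by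
          intro η hη
          have hkd' : kdist η θ = m := (Finset.mem_filter.mp hη).2
          have hle := hdist_le η θ
          unfold kdist at hkd'
          rw [Finset.mem_union, Finset.mem_filter, Finset.mem_filter]
          rcases min_cases (hdist η θ) (n - hdist η θ) with ⟨h1, h2⟩ | ⟨h1, h2⟩
          · left; exact ⟨Finset.mem_univ _, by omega⟩
          · right; exact ⟨Finset.mem_univ _, by omega⟩
        calc (E.filter (fun η => kdist η θ = m)).card
            ≤ _ := Finset.card_le_card hsub
          _ ≤ (univ.filter fun η : Fin n → Bool => hdist η θ = m).card
              + (univ.filter fun η : Fin n → Bool => hdist η θ = n - m).card :=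
              Finset.card_union_le _ _
          _ ≤ n.choose m + n.choose (n - m) :=
              add_le_add (card_hdist_fiber θ m) (card_hdist_fiber θ (n-m))
          _ = 2 * n.choose m := by rw [Nat.choose_symm (by omega : m ≤ n)]; ring
      have hrho_pow : (rho p q) ^ (m * (n - m)) ≤ Real.exp (-((m:ℝ) * (B+1))) := by
        calc (rho p q) ^ (m * (n - m)) ≤ (Real.exp (-(2*(B+1))/n)) ^ (m * (n - m)) :=
              pow_le_pow_left₀ rho_nonneg hrho _
          _ = Real.exp (((m * (n-m) : ℕ) : ℝ) * (-(2*(B+1))/n)) := by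
              rw [Real.exp_nat_mul]
          _ ≤ Real.exp (-((m:ℝ) * (B+1))) := by
              apply Real.exp_le_exp.mpr
              have hcast : ((m * (n-m) : ℕ) : ℝ) = (m:ℝ) * ((n:ℝ) - m) := by
                push_cast [Nat.cast_sub (by omega : m ≤ n)]; ring
              rw [hcast]
              have hnm : (n:ℝ)/2 ≤ (n:ℝ) - m := by
                have : (2*m : ℝ) ≤ n := by exact_mod_cast h2m
                linarith
              have hm0 : (0:ℝ) ≤ m := Nat.cast_nonneg m
              set s : ℝ := 2*(B+1)/(n:ℝ) with hs_def
              have hs : 0 < s := by rw [hs_def]; positivity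
              have hsn : (n:ℝ) * s = 2*(B+1) := by rw [hs_def]; field_simp
              have final : (m:ℝ)*(B+1) ≤ (m:ℝ)*(((n:ℝ)-m) * s) := by
                nlinarith [mul_nonneg (mul_nonneg hm0 hs.le)
                  (by linarith : (0:ℝ) ≤ ((n:ℝ) - m) - (n:ℝ)/2)]
              have e2 : (m:ℝ) * ((n:ℝ) - m) * (-(2*(B+1))/n)
                  = -((m:ℝ)*(((n:ℝ)-m) * s)) := by rw [hs_def]; ring
              rw [e2]
              linarith
      have hchoose : (n.choose m : ℝ) ≤ Real.exp (m * (1 - Real.log ((m:ℝ)/n))) :=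
        choose_le_exp (by omega) (by omega)
      have hphi : T + ((m - (k+1) : ℕ) : ℝ)/2 ≤ (m:ℝ) * (Real.log ((m:ℝ)/n) + B) := by
        have hchain := phi_chain (N := (n:ℝ)) (B := B) (a := a) hn0 ha k
          (by linarith : a * (n:ℝ) ≤ (k:ℝ) + 1) hG (m - (k+1))
        have hcast : ((k:ℝ) + 1 + ((m - (k+1) : ℕ) : ℝ)) = (m:ℝ) := by
          push_cast [Nat.cast_sub (by omega : k+1 ≤ m)]; ring
        rw [hcast] at hchain
        exact hchain
      have hgeom : Real.exp (-((m:ℝ) * (Real.log ((m:ℝ)/n) + B)))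
          ≤ Real.exp (-T) * (Real.exp (-(1/2):ℝ))^(m - (k+1)) := by
        have e3 : (Real.exp (-(1/2):ℝ))^(m - (k+1))
            = Real.exp (-(((m - (k+1) : ℕ) : ℝ)/2)) := by
          rw [← Real.exp_nat_mul]
          congr 1
          ring
        rw [e3, ← Real.exp_add]
        apply Real.exp_le_exp.mpr
        linarith
      calc ((E.filter (fun η => kdist η θ = m)).card : ℝ) * (rho p q) ^ (m * (n - m))
          ≤ (2 * n.choose m : ℝ) * Real.exp (-((m:ℝ) * (B+1))) := by
            apply mul_le_mul _ hrho_pow (pow_nonneg rho_nonneg _) (by positivity)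
            exact_mod_cast hcard
        _ ≤ 2 * (Real.exp (m * (1 - Real.log ((m:ℝ)/n))) * Real.exp (-((m:ℝ) * (B+1)))) := by
            rw [mul_assoc]
            apply mul_le_mul_of_nonneg_left _ (by norm_num : (0:ℝ) ≤ 2)
            apply mul_le_mul_of_nonneg_right hchoose (Real.exp_pos _).le
        _ = 2 * Real.exp (-((m:ℝ) * (Real.log ((m:ℝ)/n) + B))) := by
            rw [← Real.exp_add]
            congr 2
            ring
        _ ≤ 2 * (Real.exp (-T) * (Real.exp (-(1/2):ℝ))^(m - (k+1))) := by
            apply mul_le_mul_of_nonneg_left hgeom (by norm_num : (0:ℝ) ≤ 2)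
        _ = 2 * Real.exp (-T) * (Real.exp (-(1/2):ℝ))^(m - (k+1)) := by ring
  have total : ∑ η ∈ E, (rho p q) ^ (hdist η θ * (n - hdist η θ)) ≤ 6 * Real.exp (-T) := by
    rw [fib]
    calc ∑ m ∈ Finset.Icc (k+1) n, ∑ η ∈ E.filter (fun η => kdist η θ = m),
            (rho p q) ^ (hdist η θ * (n - hdist η θ))
        ≤ ∑ m ∈ Finset.Icc (k+1) n,
            2 * Real.exp (-T) * (Real.exp (-(1/2):ℝ))^(m - (k+1)) :=
          Finset.sum_le_sum per_m
      _ = 2 * Real.exp (-T) * ∑ m ∈ Finset.Icc (k+1) n, (Real.exp (-(1/2):ℝ))^(m - (k+1)) := by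
          rw [Finset.mul_sum]
      _ ≤ 2 * Real.exp (-T) * 3 := by
          apply mul_le_mul_of_nonneg_left (geom_tail (k+1) n) (by positivity)
      _ = 6 * Real.exp (-T) := by ring
  have errfin : ∑ x : ObsGraph n, pmf θ x * ((∑ η ∈ E, u * pmf η x) / D x) ≤ 6 * Real.exp (-T) :=
    le_trans err_le total
  linarith

/-- in the Kesten–Stigum phase, if
`a_n n (log a_n + (1/4)(√c_n − √d_n)² − 1) → ∞` then the posterior recovers the
community assignment almost-exactly with error rate `k_n ≥ a_n n`. -/
theorem stmt11 (c d : ℕ → ℝ) (hc0 : ∀ n, 2 ≤ n → 0 < c n) (hd0 : ∀ n, 2 ≤ n → 0 < d n)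
    (hcB : ∃ C : ℝ, ∀ n, c n ≤ C) (hdB : ∃ C : ℝ, ∀ n, d n ≤ C)
    (hp : ∀ n, 2 ≤ n → c n / n ∈ Set.Ioo (0:ℝ) 1)
    (hq : ∀ n, 2 ≤ n → d n / n ∈ Set.Ioo (0:ℝ) 1)
    (θ : (n : ℕ) → Fin n → Bool) (hθ : ∀ n, 2 ≤ n → θ n ∈ Theta n)
    (a : ℕ → ℝ) (ha : ∀ n, a n ∈ Set.Ioo (0:ℝ) (1/2))
    (k : ℕ → ℕ) (hk : ∀ n, a n * n ≤ (k n : ℝ))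
    (hcond : Filter.Tendsto
      (fun n : ℕ => a n * n * (Real.log (a n)
        + (1/4) * (Real.sqrt (c n) - Real.sqrt (d n))^2 - 1))
      Filter.atTop Filter.atTop) :
    Filter.Tendsto (fun n : ℕ =>
        expPostMass (c n / n) (d n / n) (unifPrior n) (θ n) (hball (θ n) (k n)))
      Filter.atTop (nhds 1) := by
  set T : ℕ → ℝ := fun n => a n * n * (Real.log (a n)
        + (1/4) * (Real.sqrt (c n) - Real.sqrt (d n))^2 - 1) with hTdef
  have h0 : Filter.Tendsto (fun n => Real.exp (-(T n))) Filter.atTop (nhds 0) :=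
    Real.tendsto_exp_atBot.comp (Filter.tendsto_neg_atTop_atBot.comp hcond)
  have hlow : Filter.Tendsto (fun n => 1 - 6 * Real.exp (-(T n))) Filter.atTop (nhds 1) := by
    have h1 : Filter.Tendsto (fun n => 6 * Real.exp (-(T n))) Filter.atTop (nhds 0) := by
      simpa using h0.const_mul (6:ℝ)
    simpa using (tendsto_const_nhds (x := (1:ℝ)) (f := Filter.atTop)).sub h1
  have hmain : ∀ n : ℕ, 2 ≤ n → 1 ≤ T n →
      (1 - 6 * Real.exp (-(T n))
        ≤ expPostMass (c n / n) (d n / n) (unifPrior n) (θ n) (hball (θ n) (k n))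
      ∧ expPostMass (c n / n) (d n / n) (unifPrior n) (θ n) (hball (θ n) (k n)) ≤ 1) := by
    intro n hn2 hT1
    have hn0 : (0:ℝ) < n := by positivity
    set B : ℝ := (1/4) * (Real.sqrt (c n) - Real.sqrt (d n))^2 - 1 with hB
    have hTn : T n = a n * n * (Real.log (a n) + B) := by rw [hTdef, hB]; ring
    have hG : 0 ≤ Real.log (a n) + B := by
      by_contra hneg
      push_neg at hneg
      have h1 : 0 < a n * n := mul_pos (ha n).1 hn0
      nlinarith [hTn ▸ hT1]
    have hp' := hp n hn2
    have hq' := hq n hn2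
    have hsq : (Real.sqrt (c n / n) - Real.sqrt (d n / n))^2
        = (Real.sqrt (c n) - Real.sqrt (d n))^2 / n := by
      rw [Real.sqrt_div (hc0 n hn2).le, Real.sqrt_div (hd0 n hn2).le,
        div_sub_div_same, div_pow, Real.sq_sqrt (by positivity : (0:ℝ) ≤ (n:ℝ))]
    have hrho : rho (c n / n) (d n / n) ≤ Real.exp (-(2*(B+1))/n) := by
      refine le_trans (rho_le_exp hp'.1.le hp'.2.le hq'.1.le hq'.2.le) ?_
      apply le_of_eq
      congr 1
      rw [hsq, hB]
      ring
    have := main_bound hn2 hp' hq' (hθ n hn2) (ha n).1 (ha n).2 (hk n) hG hrho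
    rw [show a n * (n:ℝ) * (Real.log (a n) + B) = T n from hTn.symm] at this
    exact this
  apply tendsto_of_tendsto_of_tendsto_of_le_of_le' hlow tendsto_const_nhds
  · filter_upwards [Filter.eventually_ge_atTop 2, hcond.eventually_ge_atTop 1] with n hn2 hT1
    exact (hmain n hn2 hT1).1
  · filter_upwards [Filter.eventually_ge_atTop 2, hcond.eventually_ge_atTop 1] with n hn2 hT1
    exact (hmain n hn2 hT1).2
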